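/- arXiv:1805.04896 — 2 statements merged into one kernel-verified Lean document; each statement's English description precedes it below -/
import Mathlib

section
/- Suppose ⟨e,ρ⟩ = −1 and ⟨ẽ,ρ̃⟩ = −1 (i.e. e and ẽ are Demazure roots with associated rays ρ and ρ̃) and φ, φ̃ ∈ F are nonzero. Then the vertical-type derivations D_{e,ρ,φ} and D_{ẽ,ρ̃,φ̃} commute on B (i.e. D_{e,ρ,φ}∘D_{ẽ,ρ̃,φ̃} = D_{ẽ,ρ̃,φ̃}∘D_{e,ρ,φ}) if and only if one of the following conditions holds: (1) ⟨ẽ,ρ⟩ = 0 and ⟨e,ρ̃⟩ = 0; (2) ρ = ρ̃. -/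
/- STATEMENT 1: Two vertical-type derivations `D_{e,ρ,φ}` and `D_{e',ρ',φ'}`
(with `⟨e,ρ⟩ = ⟨e',ρ'⟩ = −1`, `φ, φ' ≠ 0`) commute on `B = K(t)[ℤⁿ]` iff
either `⟨e',ρ⟩ = 0 = ⟨e,ρ'⟩` or `ρ = ρ'`. -/

noncomputable section

/-- standard pairing `⟨m,v⟩ = Σᵢ mᵢ vᵢ` on `ℤⁿ`. -/
def pairZ {n : ℕ} (m v : Fin n → ℤ) : ℤ := ∑ i, m i * v i

/-- Vertical-type derivation `D_{e,ρ,φ}` on the group algebra `B = K(t)[ℤⁿ]`,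
the `K(t)`-linear map determined by `f·χ^m ↦ ⟨m,ρ⟩·φ·f·χ^{m+e}`. -/
def Dvert {K : Type*} [Field K] {n : ℕ} (e ρ : Fin n → ℤ) (φ : RatFunc K)
    (b : (Fin n → ℤ) →₀ RatFunc K) : (Fin n → ℤ) →₀ RatFunc K :=
  b.sum fun m f => Finsupp.single (m + e) ((pairZ m ρ : RatFunc K) * φ * f)

instance {K : Type*} [Field K] [CharZero K] : CharZero (RatFunc K) :=
  charZero_of_injective_algebraMap (algebraMap K (RatFunc K)).injective

lemma pairZ_add {n : ℕ} (m m' v : Fin n → ℤ) :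
    pairZ (m + m') v = pairZ m v + pairZ m' v := by
  simp [pairZ, add_mul, Finset.sum_add_distrib]

lemma pairZ_single {n : ℕ} (i : Fin n) (v : Fin n → ℤ) :
    pairZ (Pi.single i 1) v = v i := by
  simp [pairZ, Pi.single_apply]

lemma Dvert_single {K : Type*} [Field K] {n : ℕ} (e ρ : Fin n → ℤ) (φ : RatFunc K)
    (m : Fin n → ℤ) (f : RatFunc K) :
    Dvert e ρ φ (Finsupp.single m f)
      = Finsupp.single (m + e) ((pairZ m ρ : RatFunc K) * φ * f) := by
  rw [Dvert, Finsupp.sum_single_index]; simp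

lemma Dvert_zero {K : Type*} [Field K] {n : ℕ} (e ρ : Fin n → ℤ) (φ : RatFunc K) :
    Dvert e ρ φ 0 = 0 := Finsupp.sum_zero_index

lemma Dvert_add {K : Type*} [Field K] {n : ℕ} (e ρ : Fin n → ℤ) (φ : RatFunc K)
    (b c : (Fin n → ℤ) →₀ RatFunc K) :
    Dvert e ρ φ (b + c) = Dvert e ρ φ b + Dvert e ρ φ c := by
  apply Finsupp.sum_add_index <;> intros <;> simp [mul_add, Finsupp.single_add]

theorem vertical_derivations_commute_iff
    {K : Type*} [Field K] [IsAlgClosed K] [CharZero K] {n : ℕ} (hn : 1 ≤ n)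
    (e ρ e' ρ' : Fin n → ℤ) (φ φ' : RatFunc K)
    (he : pairZ e ρ = -1) (he' : pairZ e' ρ' = -1)
    (hφ : φ ≠ 0) (hφ' : φ' ≠ 0) :
    (∀ b : (Fin n → ℤ) →₀ RatFunc K,
        Dvert e ρ φ (Dvert e' ρ' φ' b) = Dvert e' ρ' φ' (Dvert e ρ φ b))
    ↔ (pairZ e' ρ = 0 ∧ pairZ e ρ' = 0) ∨ ρ = ρ' := by
  constructor
  · intro h
    -- extract the scalar identity
    have key : ∀ m : Fin n → ℤ,
        pairZ e' ρ * pairZ m ρ' = pairZ e ρ' * pairZ m ρ := by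
      intro m
      have h1 := h (Finsupp.single m 1)
      rw [Dvert_single, Dvert_single, Dvert_single, Dvert_single] at h1
      rw [show m + e' + e = m + e + e' from add_right_comm m e' e] at h1
      have h2 := Finsupp.single_injective (m + e + e') h1
      have h3 : ((pairZ (m + e') ρ * pairZ m ρ' : ℤ) : RatFunc K) * (φ * φ')
          = ((pairZ (m + e) ρ' * pairZ m ρ : ℤ) : RatFunc K) * (φ * φ') := by
        push_cast
        linear_combination h2
      have h4 : pairZ (m + e') ρ * pairZ m ρ' = pairZ (m + e) ρ' * pairZ m ρ := by
        exact_mod_cast mul_right_cancel₀ (mul_ne_zero hφ hφ') h3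
      rw [pairZ_add, pairZ_add] at h4
      linear_combination h4
    have hae := key e
    have hae' := key e'
    rw [he'] at hae'
    rw [he] at hae
    -- let a = pairZ e' ρ, b = pairZ e ρ'.  hae : a*b = b*(-1), hae' : a*(-1) = b*a
    have hab : pairZ e' ρ = pairZ e ρ' := by
      linarith [hae, hae', mul_comm (pairZ e' ρ) (pairZ e ρ')]
    have hsq : pairZ e' ρ * (pairZ e' ρ + 1) = 0 := by
      linear_combination (-1 : ℤ) * hae' + pairZ e' ρ * hab
    rcases mul_eq_zero.1 hsq with h0 | h0
    · exact Or.inl ⟨h0, by rw [← hab]; exact h0⟩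
    · have ha : pairZ e' ρ = -1 := by linarith
      have hb : pairZ e ρ' = -1 := by rw [← hab]; exact ha
      right
      funext i
      have := key (Pi.single i 1)
      rw [pairZ_single, pairZ_single, ha, hb] at this
      linarith
  · intro hc
    have key : ∀ m : Fin n → ℤ,
        pairZ e' ρ * pairZ m ρ' = pairZ e ρ' * pairZ m ρ := by
      rcases hc with ⟨h1, h2⟩ | h1
      · intro m; rw [h1, h2]; ring
      · subst h1
        intro m
        rw [he, he']
    intro b
    induction b using Finsupp.induction_linear with
    | zero => simp [Dvert_zero]
    | add f g hf hg => simp [Dvert_add, hf, hg]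
    | single m f =>
      rw [Dvert_single, Dvert_single, Dvert_single, Dvert_single,
        show m + e' + e = m + e + e' from add_right_comm m e' e]
      congr 1
      have hk : ((pairZ e' ρ * pairZ m ρ' : ℤ) : RatFunc K)
          = ((pairZ e ρ' * pairZ m ρ : ℤ) : RatFunc K) := by exact_mod_cast key m
      push_cast [pairZ_add] at hk ⊢
      linear_combination φ * φ' * f * hk
end
end

section
/- Let K be an algebraically closed field of characteristic zero and consider the polynomial algebra K[x,y] with the ℤ-grading for which x is homogeneous of degree 1 and y is homogeneous of degree −1 (the component of degree j is spanned by the monomials x^p y^q with p − q = j). Then every nonzero locally nilpotent derivation ∂ of K[x,y] that is homogeneous with respect to this grading is of the form ∂ = c·x^a·∂/∂y for some c ∈ K∖{0} and integer a ≥ 0, or of the form ∂ = c·y^b·∂/∂x for some c ∈ K∖{0} and integer b ≥ 0. -/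
/- STATEMENT 13: every nonzero homogeneous locally nilpotent derivation of
`K[x,y]` with the `ℤ`-grading `deg x = 1`, `deg y = −1` has the form
`c·x^a·∂/∂y` or `c·y^b·∂/∂x` with `c ∈ K∖{0}` and `a, b ≥ 0`. Here
`K[x,y] = MvPolynomial (Fin 2) K` with `x = X 0`, `y = X 1`, and the
degree-`j` component is the weighted homogeneous submodule for the weights
`(1, −1)`. -/

noncomputable section
open MvPolynomial

namespace HLNDaux

open Finset Function

variable {R A : Type*} [CommRing R] [CommRing A] [Algebra R A] (D : Derivation R A A)

theorem D_mul (a b : A) : D (a * b) = D a * b + a * D b := by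
  rw [D.leibniz]; simp only [smul_eq_mul]; ring

theorem iterate_leibniz (p q : A) (n : ℕ) :
    (⇑D)^[n] (p * q) =
      ∑ k ∈ range n.succ, (n.choose k • ((⇑D)^[n - k] p * (⇑D)^[k] q)) := by
  induction n with
  | zero =>
    simp [Finset.range]
  | succ n IH =>
    calc
      (⇑D)^[n + 1] (p * q) =
          D (∑ k ∈ range n.succ,
              n.choose k • ((⇑D)^[n - k] p * (⇑D)^[k] q)) := by
        rw [Function.iterate_succ_apply', IH]
      _ = (∑ k ∈ range n.succ,
            n.choose k • ((⇑D)^[n - k + 1] p * (⇑D)^[k] q)) +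
          ∑ k ∈ range n.succ,
            n.choose k • ((⇑D)^[n - k] p * (⇑D)^[k + 1] q) := by
        rw [map_sum]
        simp_rw [map_nsmul, D_mul, Function.iterate_succ_apply',
          smul_add, sum_add_distrib]
      _ = (∑ k ∈ range n.succ,
                n.choose k.succ • ((⇑D)^[n - k] p * (⇑D)^[k + 1] q)) +
              1 • ((⇑D)^[n + 1] p * (⇑D)^[0] q) +
            ∑ k ∈ range n.succ, n.choose k • ((⇑D)^[n - k] p * (⇑D)^[k + 1] q) :=
        ?_
      _ = ((∑ k ∈ range n.succ, n.choose k • ((⇑D)^[n - k] p * (⇑D)^[k + 1] q)) +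
              ∑ k ∈ range n.succ,
                n.choose k.succ • ((⇑D)^[n - k] p * (⇑D)^[k + 1] q)) +
            1 • ((⇑D)^[n + 1] p * (⇑D)^[0] q) := by
        rw [add_comm, add_assoc]
      _ = (∑ i ∈ range n.succ,
              (n + 1).choose (i + 1) • ((⇑D)^[n + 1 - (i + 1)] p * (⇑D)^[i + 1] q)) +
            1 • ((⇑D)^[n + 1] p * (⇑D)^[0] q) := by
        simp_rw [Nat.choose_succ_succ, Nat.succ_sub_succ, add_smul, sum_add_distrib]
      _ = ∑ k ∈ range n.succ.succ,
            n.succ.choose k • ((⇑D)^[n.succ - k] p * (⇑D)^[k] q) := by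
        rw [sum_range_succ' _ n.succ, Nat.choose_zero_right, tsub_zero]
    congr
    refine (sum_range_succ' _ _).trans (congr_arg₂ (· + ·) ?_ ?_)
    · rw [sum_range_succ, Nat.choose_succ_self, zero_smul, add_zero]
      refine sum_congr rfl fun k hk => ?_
      rw [mem_range] at hk
      congr
      omega
    · rw [Nat.choose_zero_right, tsub_zero]

/-- `f` has exact nilpotency degree `n` under `D`. -/
def Nil (f : A) (n : ℕ) : Prop := (⇑D)^[n] f ≠ 0 ∧ (⇑D)^[n + 1] f = 0

theorem iterate_zero_of_le {f : A} {m n : ℕ} (h : (⇑D)^[m] f = 0) (hmn : m ≤ n) :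
    (⇑D)^[n] f = 0 := by
  obtain ⟨j, rfl⟩ := Nat.exists_eq_add_of_le hmn
  rw [add_comm, Function.iterate_add_apply, h]
  exact Function.iterate_fixed (map_zero D) j

theorem Nil.ne_zero {f : A} {n : ℕ} (h : Nil D f n) : f ≠ 0 := by
  rintro rfl
  exact h.1 (Function.iterate_fixed (map_zero D) n)

theorem nil_unique {f : A} {m n : ℕ} (hm : Nil D f m) (hn : Nil D f n) : m = n := by
  by_contra h
  rcases Nat.lt_or_ge m n with h' | h'
  · exact hn.1 (iterate_zero_of_le D hm.2 h')
  · exact hm.1 (iterate_zero_of_le D hn.2 (by omega))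

theorem nil_deriv {f : A} {n : ℕ} : Nil D (D f) n ↔ Nil D f (n + 1) := by
  unfold Nil
  rw [← Function.iterate_succ_apply, ← Function.iterate_succ_apply]

theorem exists_nil (hln : ∀ f : A, ∃ N : ℕ, 0 < N ∧ (⇑D)^[N] f = 0) {f : A} (hf : f ≠ 0) :
    ∃ n, Nil D f n := by
  classical
  have h : ∃ n : ℕ, (⇑D)^[n + 1] f = 0 := by
    obtain ⟨N, hN, h0⟩ := hln f
    exact ⟨N - 1, by rwa [Nat.sub_add_cancel hN]⟩
  refine ⟨Nat.find h, ?_, Nat.find_spec h⟩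
  rcases Nat.eq_zero_or_pos (Nat.find h) with h0 | h0
  · rwa [h0]
  · have := Nat.find_min h (m := Nat.find h - 1) (by omega)
    rwa [Nat.sub_add_cancel h0] at this

section Domain

variable [IsDomain A] [CharZero A]

theorem nil_mul {f g : A} {m n : ℕ} (hf : Nil D f m) (hg : Nil D g n) :
    Nil D (f * g) (m + n) := by
  have key : ∀ N : ℕ, (⇑D)^[N] (f * g) =
      ∑ k ∈ range N.succ, (N.choose k • ((⇑D)^[N - k] f * (⇑D)^[k] g)) :=
    fun N => iterate_leibniz D f g N
  constructor
  · rw [key]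
    rw [Finset.sum_eq_single n]
    · have h1 : (⇑D)^[m + n - n] f = (⇑D)^[m] f := by congr 1; omega
      rw [h1, nsmul_eq_mul]
      refine mul_ne_zero ?_ (mul_ne_zero hf.1 hg.1)
      exact_mod_cast Nat.cast_ne_zero.mpr (Nat.choose_pos (by omega : n ≤ m + n)).ne'
    · intro k hk hkn
      rcases Nat.lt_or_ge k n with h' | h'
      · have : (⇑D)^[m + n - k] f = 0 := iterate_zero_of_le D hf.2 (by omega)
        rw [this, zero_mul, smul_zero]
      · have : (⇑D)^[k] g = 0 := iterate_zero_of_le D hg.2 (by omega)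
        rw [this, mul_zero, smul_zero]
    · intro h
      exact absurd (mem_range.mpr (by omega)) h
  · rw [key]
    refine Finset.sum_eq_zero fun k hk => ?_
    rcases Nat.lt_or_ge k (n + 1) with h' | h'
    · have : (⇑D)^[m + n + 1 - k] f = 0 := iterate_zero_of_le D hf.2 (by omega)
      rw [this, zero_mul, smul_zero]
    · have : (⇑D)^[k] g = 0 := iterate_zero_of_le D hg.2 (by omega)
      rw [this, mul_zero, smul_zero]

theorem nil_pow {f : A} {m : ℕ} (hf : Nil D f m) (j : ℕ) : Nil D (f ^ j) (j * m) := by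
  induction j with
  | zero => simp [Nil, map_one]
  | succ j IH =>
    have h2 := nil_mul D IH hf
    rw [← pow_succ] at h2
    have h3 : (j + 1) * m = j * m + m := by ring
    rw [h3]
    exact h2

end Domain

theorem coeff_pderiv' {R σ : Type*} [CommRing R] [DecidableEq σ] (i : σ) (f : MvPolynomial σ R)
    (d : σ →₀ ℕ) :
    coeff d (pderiv i f) = (d i + 1 : ℕ) * coeff (d + Finsupp.single i 1) f := by
  induction f using MvPolynomial.induction_on' with
  | monomial u a =>
    rw [pderiv_monomial, coeff_monomial, coeff_monomial]
    by_cases h : u = d + Finsupp.single i 1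
    · subst h
      rw [if_pos (by simp), if_pos rfl]
      simp [Finsupp.add_apply, Finsupp.single_eq_same, mul_comm]
    · rw [if_neg h]
      by_cases hu : u i = 0
      · by_cases h2 : u - Finsupp.single i 1 = d
        · rw [if_pos h2, hu]; simp
        · rw [if_neg h2]; simp
      · have hle : Finsupp.single i 1 ≤ u := by
          rw [Finsupp.single_le_iff]; omega
        have h2 : u - Finsupp.single i 1 ≠ d := by
          intro h3
          apply h
          rw [← h3, tsub_add_cancel_of_le hle]
        rw [if_neg h2]; simp
  | add p q hp hq =>
    simp only [map_add, coeff_add, hp, hq, mul_add]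

theorem dvd_of_support {R σ : Type*} [CommRing R] (i : σ) (m : ℕ) (f : MvPolynomial σ R)
    (h : ∀ d ∈ f.support, m ≤ d i) : ∃ g, f = X i ^ m * g := by
  classical
  refine ⟨∑ d ∈ f.support, monomial (d - Finsupp.single i m) (coeff d f), ?_⟩
  rw [Finset.mul_sum]
  conv_lhs => rw [f.as_sum]
  refine Finset.sum_congr rfl fun d hd => ?_
  rw [X_pow_eq_monomial, monomial_mul, one_mul]
  congr 1
  have hle : Finsupp.single i m ≤ d := by
    rw [Finsupp.single_le_iff]; exact h d hd
  rw [add_tsub_cancel_of_le hle]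

theorem wdeg_eval (d : Fin 2 →₀ ℕ) :
    Finsupp.weight (![1, -1] : Fin 2 → ℤ) d = (d 0 : ℤ) - (d 1 : ℤ) := by
  have hd : d = Finsupp.single 0 (d 0) + Finsupp.single 1 (d 1) := by
    ext i
    fin_cases i <;> simp [Finsupp.add_apply]
  rw [hd, map_add]
  simp [Finsupp.weight_apply, Finsupp.sum_single_index]
  ring

end HLNDaux

open HLNDaux

theorem homogeneous_lnd_on_plane
    {K : Type*} [Field K] [IsAlgClosed K] [CharZero K]
    (D : Derivation K (MvPolynomial (Fin 2) K) (MvPolynomial (Fin 2) K))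
    (hD : D ≠ 0)
    (hln : ∀ f : MvPolynomial (Fin 2) K, ∃ N : ℕ, 0 < N ∧ (⇑D)^[N] f = 0)
    (hhom : ∃ k : ℤ, ∀ (j : ℤ) (f : MvPolynomial (Fin 2) K),
      f ∈ weightedHomogeneousSubmodule K (![1, -1] : Fin 2 → ℤ) j →
        D f ∈ weightedHomogeneousSubmodule K (![1, -1] : Fin 2 → ℤ) (j + k)) :
    (∃ c : K, c ≠ 0 ∧ ∃ a : ℕ,
        D = ((C c * X 0 ^ a : MvPolynomial (Fin 2) K)) • (pderiv (R := K) (1 : Fin 2)))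
    ∨ (∃ c : K, c ≠ 0 ∧ ∃ b : ℕ,
        D = ((C c * X 1 ^ b : MvPolynomial (Fin 2) K)) • (pderiv (R := K) (0 : Fin 2))) := by
  classical
  obtain ⟨k, hk⟩ := hhom
  set w : Fin 2 → ℤ := ![1, -1] with hw
  -- the images of the generators are weighted homogeneous
  have hX0 : (X 0 : MvPolynomial (Fin 2) K) ∈ weightedHomogeneousSubmodule K w 1 := by
    rw [mem_weightedHomogeneousSubmodule]
    have h := isWeightedHomogeneous_X K w (0 : Fin 2)
    simpa [hw] using h
  have hX1 : (X 1 : MvPolynomial (Fin 2) K) ∈ weightedHomogeneousSubmodule K w (-1) := by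
    rw [mem_weightedHomogeneousSubmodule]
    have h := isWeightedHomogeneous_X K w (1 : Fin 2)
    simpa [hw] using h
  have hP : IsWeightedHomogeneous w (D (X 0)) (1 + k) := by
    have h := hk 1 (X 0) hX0
    rwa [mem_weightedHomogeneousSubmodule] at h
  have hQ : IsWeightedHomogeneous w (D (X 1)) (-1 + k) := by
    have h := hk (-1) (X 1) hX1
    rwa [mem_weightedHomogeneousSubmodule] at h
  have hPs : ∀ d ∈ (D (X 0)).support, (d 0 : ℤ) - (d 1 : ℤ) = 1 + k := by
    intro d hd
    rw [← wdeg_eval]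
    exact hP (mem_support_iff.mp hd)
  have hQs : ∀ d ∈ (D (X 1)).support, (d 0 : ℤ) - (d 1 : ℤ) = -1 + k := by
    intro d hd
    rw [← wdeg_eval]
    exact hQ (mem_support_iff.mp hd)
  by_cases hP0 : D (X 0) = 0 <;> by_cases hQ0 : D (X 1) = 0
  · -- both zero: D = 0, contradiction
    exact absurd (derivation_ext fun i => by
      fin_cases i <;> simp [hP0, hQ0]) hD
  · -- D x = 0, D y ≠ 0 : left case
    set Q := D (X 1) with hQdef
    have hext : D = Q • pderiv (R := K) (1 : Fin 2) := by
      apply derivation_ext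
      intro i
      fin_cases i <;> simp [hP0, ← hQdef]
    have hpd : pderiv (1 : Fin 2) Q = 0 := by
      by_contra hne
      obtain ⟨n, hn⟩ := exists_nil D hln hQ0
      obtain ⟨r, hr⟩ := exists_nil D hln hne
      have hDQ : D Q = Q * pderiv (1 : Fin 2) Q := by
        conv_lhs => rw [hext]
        simp
      have h1 : Nil D (D Q) (n + r) := by
        rw [hDQ]
        exact nil_mul D hn hr
      have h2 := (nil_deriv D).mp h1
      have := nil_unique D hn h2
      omega
    have hsup : ∀ d ∈ Q.support, d (1 : Fin 2) = 0 := by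
      intro d hd
      by_contra h
      have hle : Finsupp.single (1 : Fin 2) 1 ≤ d := Finsupp.single_le_iff.mpr (by omega)
      have hc := coeff_pderiv' (1 : Fin 2) Q (d - Finsupp.single 1 1)
      rw [tsub_add_cancel_of_le hle, hpd, coeff_zero] at hc
      exact mul_ne_zero (Nat.cast_ne_zero.mpr (Nat.succ_ne_zero _))
        (mem_support_iff.mp hd) hc.symm
    obtain ⟨d0, hd0⟩ := (support_nonempty (p := Q)).mpr hQ0
    set a := d0 0 with ha
    have hall : ∀ d ∈ Q.support, d = Finsupp.single (0 : Fin 2) a := by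
      intro d hd
      have h1 := hQs d hd
      have h2 := hsup d hd
      have h3 := hQs d0 hd0
      have h4 := hsup d0 hd0
      have e0 : d 0 = a := by omega
      ext i
      fin_cases i
      · simpa using e0
      · simpa using h2
    have hQm : Q = monomial (Finsupp.single (0 : Fin 2) a)
        (coeff (Finsupp.single (0 : Fin 2) a) Q) := by
      ext d
      rw [coeff_monomial]
      by_cases h : Finsupp.single (0 : Fin 2) a = d
      · rw [if_pos h, h]
      · rw [if_neg h]
        by_contra hc
        exact h ((hall d (mem_support_iff.mpr hc)).symm)
    have hc : coeff (Finsupp.single (0 : Fin 2) a) Q ≠ 0 := by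
      intro h
      apply hQ0
      rw [hQdef] at hQm ⊢
      rw [hQm, h, map_zero]
    refine Or.inl ⟨_, hc, a, ?_⟩
    rw [hext, C_mul_X_pow_eq_monomial, ← hQm]
  · -- D x ≠ 0, D y = 0 : right case
    set P := D (X 0) with hPdef
    have hext : D = P • pderiv (R := K) (0 : Fin 2) := by
      apply derivation_ext
      intro i
      fin_cases i <;> simp [hQ0, ← hPdef]
    have hpd : pderiv (0 : Fin 2) P = 0 := by
      by_contra hne
      obtain ⟨n, hn⟩ := exists_nil D hln hP0
      obtain ⟨r, hr⟩ := exists_nil D hln hne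
      have hDP : D P = P * pderiv (0 : Fin 2) P := by
        conv_lhs => rw [hext]
        simp
      have h1 : Nil D (D P) (n + r) := by
        rw [hDP]
        exact nil_mul D hn hr
      have h2 := (nil_deriv D).mp h1
      have := nil_unique D hn h2
      omega
    have hsup : ∀ d ∈ P.support, d (0 : Fin 2) = 0 := by
      intro d hd
      by_contra h
      have hle : Finsupp.single (0 : Fin 2) 1 ≤ d := Finsupp.single_le_iff.mpr (by omega)
      have hc := coeff_pderiv' (0 : Fin 2) P (d - Finsupp.single 0 1)
      rw [tsub_add_cancel_of_le hle, hpd, coeff_zero] at hc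
      exact mul_ne_zero (Nat.cast_ne_zero.mpr (Nat.succ_ne_zero _))
        (mem_support_iff.mp hd) hc.symm
    obtain ⟨d0, hd0⟩ := (support_nonempty (p := P)).mpr hP0
    set b := d0 1 with hb
    have hall : ∀ d ∈ P.support, d = Finsupp.single (1 : Fin 2) b := by
      intro d hd
      have h1 := hPs d hd
      have h2 := hsup d hd
      have h3 := hPs d0 hd0
      have h4 := hsup d0 hd0
      have e1 : d 1 = b := by omega
      ext i
      fin_cases i
      · simpa using h2
      · simpa using e1
    have hPm : P = monomial (Finsupp.single (1 : Fin 2) b)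
        (coeff (Finsupp.single (1 : Fin 2) b) P) := by
      ext d
      rw [coeff_monomial]
      by_cases h : Finsupp.single (1 : Fin 2) b = d
      · rw [if_pos h, h]
      · rw [if_neg h]
        by_contra hc
        exact h ((hall d (mem_support_iff.mpr hc)).symm)
    have hc : coeff (Finsupp.single (1 : Fin 2) b) P ≠ 0 := by
      intro h
      apply hP0
      rw [hPdef] at hPm ⊢
      rw [hPm, h, map_zero]
    refine Or.inr ⟨_, hc, b, ?_⟩
    rw [hext, C_mul_X_pow_eq_monomial, ← hPm]
  · -- both nonzero : contradiction
    exfalso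
    obtain ⟨p, hp⟩ := exists_nil D hln hP0
    obtain ⟨q, hq⟩ := exists_nil D hln hQ0
    have hx : Nil D (X 0 : MvPolynomial (Fin 2) K) (p + 1) := (nil_deriv D).mp hp
    have hy : Nil D (X 1 : MvPolynomial (Fin 2) K) (q + 1) := (nil_deriv D).mp hq
    have hk1 : 1 + k ≤ 0 := by
      by_contra h
      push_neg at h
      set m := (1 + k).toNat with hm
      have hmz : (m : ℤ) = 1 + k := Int.toNat_of_nonneg (by omega)
      have hm1 : 1 ≤ m := by omega
      have hdvd : ∀ d ∈ (D (X 0)).support, m ≤ d 0 := by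
        intro d hd
        have := hPs d hd
        omega
      obtain ⟨g, hg⟩ := dvd_of_support 0 m _ hdvd
      have hgne : g ≠ 0 := by
        rintro rfl
        rw [mul_zero] at hg
        exact hP0 hg
      obtain ⟨r, hr⟩ := exists_nil D hln hgne
      have h1 : Nil D (X 0 ^ m * g) (m * (p + 1) + r) := nil_mul D (nil_pow D hx m) hr
      rw [← hg] at h1
      have := nil_unique D hp h1
      nlinarith [Nat.one_le_iff_ne_zero.mp hm1]
    -- hence 1 - k ≥ 2 and we get a contradiction from Q
    set m' := (1 - k).toNat with hm'
    have hmz' : (m' : ℤ) = 1 - k := Int.toNat_of_nonneg (by omega)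
    have hm2 : 2 ≤ m' := by omega
    have hdvd : ∀ d ∈ (D (X 1)).support, m' ≤ d 1 := by
      intro d hd
      have := hQs d hd
      omega
    obtain ⟨g, hg⟩ := dvd_of_support 1 m' _ hdvd
    have hgne : g ≠ 0 := by
      rintro rfl
      rw [mul_zero] at hg
      exact hQ0 hg
    obtain ⟨r, hr⟩ := exists_nil D hln hgne
    have h1 : Nil D (X 1 ^ m' * g) (m' * (q + 1) + r) := nil_mul D (nil_pow D hy m') hr
    rw [← hg] at h1
    have := nil_unique D hq h1
    nlinarith [hm2]
end
end
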